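/- Let N ≥ 1, 2 < q ≤ p̄ < p < 2*, a > 0, μ < 0, and suppose E_μ has a positive lower bound m > 0 on P_{a,μ}. Then there exists k > 0 such that for all u ∈ S_a with |∇u|₂² ≤ k one has E_μ(u) > 0, P_μ(u) > 0, and E_μ(u) < m. -/

import Mathlib

private lemma auxA15 (α c k : ℝ) (hα : 0 < α) (hc : 0 < c) (hk : 0 ≤ k) (h : k ≤ c ^ (2/α)) :
    k ^ (α/2) ≤ c := by
  have h2 := Real.rpow_le_rpow hk h (by positivity : (0:ℝ) ≤ α/2)
  rwa [← Real.rpow_mul hc.le, div_mul_div_comm, mul_comm, div_self (by positivity),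
    Real.rpow_one] at h2

private lemma auxB15 (β c k : ℝ) (hβ : 0 < β) (hc : 0 < c) (hk : 0 ≤ k) (h : k ≤ c ^ (1/β)) :
    k ^ β ≤ c := by
  have h2 := Real.rpow_le_rpow hk h hβ.le
  rwa [← Real.rpow_mul hc.le, one_div_mul_cancel hβ.ne', Real.rpow_one] at h2

private lemma auxC15 (t k s : ℝ) (ht : 0 ≤ t) (hs : 0 ≤ s) (hk : t ^ 2 ≤ k) :
    t ^ (s : ℝ) ≤ k ^ (s/2) := by
  have h1 : t ^ (s:ℝ) = (t ^ 2) ^ (s/2) := by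
    rw [← Real.rpow_two, ← Real.rpow_mul ht, mul_div_cancel₀ _ (two_ne_zero)]
  rw [h1]
  exact Real.rpow_le_rpow (sq_nonneg t) hk (by linarith)

theorem stmt15 (N : ℕ) (hN : 1 ≤ N) (a μ q p pbar γp γq Cp Cq m : ℝ)
    (hpbar : pbar = 2 + 4 / (N : ℝ)) (hγp : γp = (N : ℝ) * (p - 2) / (2 * p))
    (hγq : γq = (N : ℝ) * (q - 2) / (2 * q))
    (hq : 2 < q) (hqp : q ≤ pbar) (hp : pbar < p)
    (hp2s : N ≤ 2 ∨ p < 2 * (N : ℝ) / ((N : ℝ) - 2))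
    (ha : 0 < a) (hμ : μ < 0) (hCp : 0 < Cp) (hCq : 0 < Cq) (hm : 0 < m)
    (X : Type) (Gn Pp Qq E Pf : X → ℝ)
    (hGn : ∀ u, 0 ≤ Gn u) (hPp : ∀ u, 0 ≤ Pp u) (hQq : ∀ u, 0 < Qq u)
    (hGNp : ∀ u, Pp u ≤ Cp ^ p * a ^ ((1 - γp) * p) * Gn u ^ (γp * p))
    (hGNq : ∀ u, Qq u ≤ Cq ^ q * a ^ ((1 - γq) * q) * Gn u ^ (γq * q))
    (hE : ∀ u, E u = Gn u ^ 2 / 2 - Pp u / p - μ * Qq u / q)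
    (hPf : ∀ u, Pf u = Gn u ^ 2 - γp * Pp u - μ * γq * Qq u)
    (hmP : ∀ u, Pf u = 0 → m ≤ E u) :
    ∃ k : ℝ, 0 < k ∧ ∀ u, Gn u ^ 2 ≤ k → 0 < E u ∧ 0 < Pf u ∧ E u < m := by
  have hN0 : (0:ℝ) < N := by exact_mod_cast hN
  have hq0 : (0:ℝ) < q := by linarith
  have hp2 : (2:ℝ) < p := by
    have : (0:ℝ) < 4 / N := by positivity
    rw [hpbar] at hp; linarith
  have hp0 : (0:ℝ) < p := by linarith
  have hγp0 : 0 < γp := by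
    rw [hγp]; exact div_pos (mul_pos hN0 (by linarith)) (by positivity)
  have hγq0 : 0 < γq := by
    rw [hγq]; exact div_pos (mul_pos hN0 (by linarith)) (by positivity)
  have hγpp : γp * p = N * (p - 2) / 2 := by
    rw [hγp]; field_simp
  have hγqq : γq * q = N * (q - 2) / 2 := by
    rw [hγq]; field_simp
  set α : ℝ := γp * p - 2 with hαdef
  have hα : 0 < α := by
    have h4 : 4 / (N:ℝ) < p - 2 := by rw [hpbar] at hp; linarith
    have h5 : 4 < (N:ℝ) * (p - 2) := by
      rw [div_lt_iff₀ hN0] at h4; nlinarith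
    rw [hαdef, hγpp]; linarith
  set β : ℝ := γq * q / 2 with hβdef
  have hβ : 0 < β := by
    have h0 : 0 < (N:ℝ) * (q - 2) := mul_pos hN0 (by linarith)
    rw [hβdef, hγqq]; linarith
  set D : ℝ := Cp ^ p * a ^ ((1 - γp) * p) with hDdef
  have hD : 0 < D := by positivity
  set Dq : ℝ := Cq ^ q * a ^ ((1 - γq) * q) with hDqdef
  have hDq : 0 < Dq := by positivity
  set C' : ℝ := (-μ) * Dq / q with hC'def
  have hC' : 0 < C' := by
    have : 0 < -μ := by linarith
    positivity
  set k : ℝ := min 1 (min (m/2) (min ((p/(2*D)) ^ (2/α))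
      (min ((1/(γp*D)) ^ (2/α)) ((m/(2*C')) ^ (1/β))))) with hkdef
  have hk0 : 0 < k := by
    refine lt_min one_pos (lt_min (by linarith) (lt_min ?_ (lt_min ?_ ?_))) <;>
      exact Real.rpow_pos_of_pos (by positivity) _
  refine ⟨k, hk0, fun u hu => ?_⟩
  have ht := hGn u
  have ht2 : (0:ℝ) ≤ Gn u ^ 2 := sq_nonneg _
  -- extract the min bounds
  have hk1 : k ≤ m/2 := le_trans (min_le_right _ _) (min_le_left _ _)
  have hk2 : k ≤ (p/(2*D)) ^ (2/α) :=
    le_trans (min_le_right _ _) (le_trans (min_le_right _ _) (min_le_left _ _))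
  have hk3 : k ≤ (1/(γp*D)) ^ (2/α) :=
    le_trans (min_le_right _ _) (le_trans (min_le_right _ _)
      (le_trans (min_le_right _ _) (min_le_left _ _)))
  have hk4 : k ≤ (m/(2*C')) ^ (1/β) :=
    le_trans (min_le_right _ _) (le_trans (min_le_right _ _)
      (le_trans (min_le_right _ _) (min_le_right _ _)))
  have hA : k ^ (α/2) ≤ p/(2*D) := auxA15 α _ k hα (by positivity) hk0.le hk2
  have hB : k ^ (α/2) ≤ 1/(γp*D) := auxA15 α _ k hα (by positivity) hk0.le hk3
  have hC : k ^ β ≤ m/(2*C') := auxB15 β _ k hβ (by positivity) hk0.le hk4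
  have hkα : (0:ℝ) ≤ k ^ (α/2) := Real.rpow_nonneg hk0.le _
  -- bound on Pp
  have hPpb : Pp u ≤ D * (k ^ (α/2) * Gn u ^ 2) := by
    have h1 : Gn u ^ (γp * p) ≤ k ^ (α/2) * Gn u ^ 2 := by
      have e1 : Gn u ^ (γp * p) = Gn u ^ α * Gn u ^ (2:ℝ) := by
        rw [← Real.rpow_add' ht (by rw [hαdef]; ring_nf; linarith)]
        congr 1; rw [hαdef]; ring
      have e2 : Gn u ^ (2:ℝ) = Gn u ^ 2 := Real.rpow_two _
      have e3 : Gn u ^ (α:ℝ) ≤ k ^ (α/2) := auxC15 _ _ _ ht hα.le hu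
      rw [e1, e2]
      exact mul_le_mul_of_nonneg_right e3 ht2
    calc Pp u ≤ D * Gn u ^ (γp * p) := hGNp u
      _ ≤ D * (k ^ (α/2) * Gn u ^ 2) := by
          exact mul_le_mul_of_nonneg_left h1 hD.le
  -- bound on Qq
  have hQqb : Qq u ≤ Dq * k ^ β := by
    have h1 : Gn u ^ (γq * q) ≤ k ^ β := by
      have hγqq0 : 0 ≤ γq * q := by positivity
      have := auxC15 (Gn u) k (γq * q) ht hγqq0 hu
      rwa [← hβdef] at this
    calc Qq u ≤ Dq * Gn u ^ (γq * q) := hGNq u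
      _ ≤ Dq * k ^ β := mul_le_mul_of_nonneg_left h1 hDq.le
  have hPphalf : Pp u / p ≤ Gn u ^ 2 / 2 := by
    have h1 : Pp u ≤ (p/2) * Gn u ^ 2 := by
      have h2 : D * (k ^ (α/2) * Gn u ^ 2) ≤ D * (p/(2*D) * Gn u ^ 2) := by
        apply mul_le_mul_of_nonneg_left _ hD.le
        exact mul_le_mul_of_nonneg_right hA ht2
      have h3 : D * (p/(2*D) * Gn u ^ 2) = (p/2) * Gn u ^ 2 := by
        field_simp
      linarith
    have h4 : Pp u / p ≤ ((p/2) * Gn u ^ 2) / p := (div_le_div_iff_of_pos_right hp0).mpr h1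
    have h5 : ((p/2) * Gn u ^ 2) / p = Gn u ^ 2 / 2 := by field_simp
    linarith
  have hPfγ : γp * Pp u ≤ Gn u ^ 2 := by
    have h2 : D * (k ^ (α/2) * Gn u ^ 2) ≤ D * (1/(γp*D) * Gn u ^ 2) := by
      apply mul_le_mul_of_nonneg_left _ hD.le
      exact mul_le_mul_of_nonneg_right hB ht2
    have h3 : D * (1/(γp*D) * Gn u ^ 2) = (1/γp) * Gn u ^ 2 := by
      field_simp
    have h4 : Pp u ≤ (1/γp) * Gn u ^ 2 := by linarith
    calc γp * Pp u ≤ γp * ((1/γp) * Gn u ^ 2) :=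
          mul_le_mul_of_nonneg_left h4 hγp0.le
      _ = Gn u ^ 2 := by field_simp
  have hμQ : μ * Qq u / q < 0 :=
    div_neg_of_neg_of_pos (mul_neg_of_neg_of_pos hμ (hQq u)) hq0
  have hμγQ : μ * γq * Qq u < 0 :=
    mul_neg_of_neg_of_pos (mul_neg_of_neg_of_pos hμ hγq0) (hQq u)
  refine ⟨?_, ?_, ?_⟩
  · rw [hE u]; linarith
  · rw [hPf u]; linarith
  · rw [hE u]
    have h1 : -(μ * Qq u / q) ≤ C' * k ^ β := by
      have h2 : -μ * Qq u ≤ -μ * (Dq * k ^ β) :=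
        mul_le_mul_of_nonneg_left hQqb (by linarith)
      have h3 : C' * k ^ β = -μ * (Dq * k ^ β) / q := by rw [hC'def]; ring
      have h4 : -(μ * Qq u / q) = -μ * Qq u / q := by ring
      rw [h3, h4]
      exact (div_le_div_iff_of_pos_right hq0).mpr h2
    have h2 : C' * k ^ β ≤ m/2 := by
      have := mul_le_mul_of_nonneg_left hC hC'.le
      have h3 : C' * (m/(2*C')) = m/2 := by field_simp
      linarith
    have h3 : Pp u / p ≥ 0 := div_nonneg (hPp u) hp0.le
    linarith
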